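/- For |q|<1, ((1+q)/(1−q))·∑_{n≥1} (1/q;q²)_n (−1)^n q^{2n}/(−q²;q²)_n − ∑_{n≥1} (1/q;q²)_{n+1} (−1)^n q^{2n+1}/(−q²;q²)_n = q. -/

import Mathlib

open scoped BigOperators

open Filter

/-- The finite q-Pochhammer symbol `(a;q)_n = ∏_{j=0}^{n-1} (1 - a q^j)`. -/
noncomputable def qPoch (a q : ℂ) (n : ℕ) : ℂ := ∏ j ∈ Finset.range n, (1 - a * q ^ j)

lemma qPoch_succ (a q : ℂ) (n : ℕ) :
    qPoch a q (n + 1) = qPoch a q n * (1 - a * q ^ n) := by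
  simp [qPoch, Finset.prod_range_succ]

lemma one_add_ne_zero {z : ℂ} (hz : ‖z‖ < 1) : (1 : ℂ) + z ≠ 0 := by
  intro h
  have : z = -1 := by linear_combination h
  rw [this] at hz; simp at hz

lemma norm_pow_succ_lt_one {q : ℂ} (hq : ‖q‖ < 1) (m : ℕ) : ‖q ^ (m + 1)‖ < 1 := by
  rw [norm_pow]
  calc ‖q‖ ^ (m + 1) ≤ ‖q‖ ^ 1 := pow_le_pow_of_le_one (norm_nonneg q) hq.le (by omega)
    _ < 1 := by simpa using hq

lemma one_add_pow_ne_zero {q : ℂ} (hq : ‖q‖ < 1) (m : ℕ) : (1 : ℂ) + q ^ (m + 1) ≠ 0 :=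
  one_add_ne_zero (norm_pow_succ_lt_one hq m)

lemma qPochD_ne_zero {q : ℂ} (hq : ‖q‖ < 1) (n : ℕ) :
    qPoch (-q ^ 2) (q ^ 2) n ≠ 0 := by
  refine Finset.prod_ne_zero_iff.2 fun j _ => ?_
  have h : (1 : ℂ) - (-q ^ 2) * (q ^ 2) ^ j = 1 + q ^ (2 * j + 1 + 1) := by
    rw [← pow_mul]; ring
  rw [h]
  exact one_add_pow_ne_zero hq _

/-- Summability from an exact multiplicative recurrence whose ratio tends (in norm) to `L < 1`. -/
lemma summable_of_mul_ratio {f : ℕ → ℂ} {r : ℕ → ℂ} (h : ∀ n, f (n + 1) = f n * r n)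
    {L : ℝ} (hL : L < 1) (hr : Tendsto (fun n => ‖r n‖) atTop (nhds L)) : Summable f := by
  set c : ℝ := (L + 1) / 2 with hc
  have hc1 : c < 1 := by rw [hc]; linarith
  have hLc : L < c := by rw [hc]; linarith
  refine summable_of_ratio_norm_eventually_le hc1 ?_
  filter_upwards [hr.eventually_le_const hLc] with n hn
  rw [h n, norm_mul]
  have := norm_nonneg (f n)
  nlinarith

lemma tendsto_ratio {q : ℂ} (hq : ‖q‖ < 1) (a b : ℕ) :
    Tendsto (fun n : ℕ => ‖(1 - q ^ (2 * n + a)) * (-q ^ 2) / (1 + q ^ (2 * n + b))‖)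
      atTop (nhds ‖(1 - 0) * (-q ^ 2) / (1 + 0)‖) := by
  have hq2 : ‖q ^ 2‖ < 1 := by
    rw [norm_pow]
    have h0 : (0 : ℝ) ≤ ‖q‖ := norm_nonneg q
    nlinarith
  have hpow : ∀ m : ℕ, Tendsto (fun n : ℕ => q ^ (2 * n + m)) atTop (nhds 0) := by
    intro m
    have h1 : Tendsto (fun n : ℕ => (q ^ 2) ^ n * q ^ m) atTop (nhds (0 * q ^ m)) :=
      (tendsto_pow_atTop_nhds_zero_of_norm_lt_one hq2).mul_const _
    rw [zero_mul] at h1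
    convert h1 using 2 with n
    rw [pow_add, pow_mul]
  have hden : Tendsto (fun n : ℕ => 1 + q ^ (2 * n + b)) atTop (nhds (1 + 0)) :=
    tendsto_const_nhds.add (hpow b)
  have hnum : Tendsto (fun n : ℕ => (1 - q ^ (2 * n + a)) * (-q ^ 2)) atTop
      (nhds ((1 - 0) * (-q ^ 2))) :=
    (tendsto_const_nhds.sub (hpow a)).mul_const _
  exact (hnum.div hden (by norm_num)).norm

lemma normq2_lt_one {q : ℂ} (hq : ‖q‖ < 1) : ‖(1 - (0:ℂ)) * (-q ^ 2) / (1 + 0)‖ < 1 := by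
  simp only [sub_zero, add_zero, one_mul, div_one, norm_neg, norm_pow]
  have h0 : (0 : ℝ) ≤ ‖q‖ := norm_nonneg q
  nlinarith

/-- For 0<|q|<1 with q≠1,
`((1+q)/(1-q)) ∑_{n≥1} (1/q;q²)_n (-1)^n q^{2n}/(-q²;q²)_n
  - ∑_{n≥1} (1/q;q²)_{n+1} (-1)^n q^{2n+1}/(-q²;q²)_n = q`. -/
theorem stmt_11 (q : ℂ) (hq0 : q ≠ 0) (hq : ‖q‖ < 1) (hq1 : q ≠ 1) :
    ((1 + q) / (1 - q)) *
        ∑' n : ℕ, qPoch (1 / q) (q ^ 2) (n + 1) * (-1 : ℂ) ^ (n + 1) * q ^ (2 * (n + 1)) /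
          qPoch (-q ^ 2) (q ^ 2) (n + 1)
      - ∑' n : ℕ, qPoch (1 / q) (q ^ 2) (n + 2) * (-1 : ℂ) ^ (n + 1) * q ^ (2 * (n + 1) + 1) /
          qPoch (-q ^ 2) (q ^ 2) (n + 1)
      = q := by
  have hq1' : (1 : ℂ) - q ≠ 0 := sub_ne_zero.2 (Ne.symm hq1)
  have hD := qPochD_ne_zero hq
  set f : ℕ → ℂ := fun n =>
    qPoch (1 / q) (q ^ 2) (n + 1) * (-1 : ℂ) ^ (n + 1) * q ^ (2 * (n + 1)) /
      qPoch (-q ^ 2) (q ^ 2) (n + 1) with hf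
  set g : ℕ → ℂ := fun n =>
    qPoch (1 / q) (q ^ 2) (n + 2) * (-1 : ℂ) ^ (n + 1) * q ^ (2 * (n + 1) + 1) /
      qPoch (-q ^ 2) (q ^ 2) (n + 1) with hg
  set β : ℕ → ℂ := fun n =>
    qPoch (1 / q) (q ^ 2) (n + 1) * (-1 : ℂ) ^ (n + 1) * q ^ (2 * (n + 1)) /
      ((1 - q) * qPoch (-q ^ 2) (q ^ 2) n) with hβ
  -- basic rewriting facts used below
  have h1q : ∀ m : ℕ, (1 : ℂ) - 1 / q * (q ^ 2) ^ (m + 1) = 1 - q ^ (2 * m + 1) := by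
    intro m
    rw [← pow_mul]
    field_simp
    ring
  have h2q : ∀ m : ℕ, (1 : ℂ) - (-q ^ 2) * (q ^ 2) ^ m = 1 + q ^ (2 * m + 2) := by
    intro m
    rw [← pow_mul]; ring
  -- recurrence ratios
  have hfr : ∀ n, f (n + 1) = f n * ((1 - q ^ (2 * n + 1)) * (-q ^ 2) / (1 + q ^ (2 * n + 4))) := by
    intro n
    simp only [hf]
    rw [show n + 1 + 1 = (n + 1) + 1 from rfl, qPoch_succ (1/q) (q^2) (n+1),
      qPoch_succ (-q^2) (q^2) (n+1), h1q n]
    have h2 : (1 : ℂ) - (-q ^ 2) * (q ^ 2) ^ (n + 1) = 1 + q ^ (2 * n + 4) := by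
      rw [h2q (n+1)]; ring
    rw [h2, div_mul_div_comm]
    rw [div_eq_div_iff (mul_ne_zero (hD (n+1)) (one_add_pow_ne_zero hq (2*n+3)))
      (mul_ne_zero (hD (n+1)) (one_add_pow_ne_zero hq (2*n+3)))]
    ring
  have hgr : ∀ n, g (n + 1) = g n * ((1 - q ^ (2 * n + 3)) * (-q ^ 2) / (1 + q ^ (2 * n + 4))) := by
    intro n
    simp only [hg]
    rw [show n + 1 + 2 = (n + 2) + 1 by ring, qPoch_succ (1/q) (q^2) (n+2),
      qPoch_succ (-q^2) (q^2) (n+1), h1q (n+1),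
      show (2 : ℕ) * (n + 1) + 1 = 2 * n + 3 by ring]
    have h2 : (1 : ℂ) - (-q ^ 2) * (q ^ 2) ^ (n + 1) = 1 + q ^ (2 * n + 4) := by
      rw [h2q (n+1)]; ring
    rw [h2, div_mul_div_comm]
    rw [div_eq_div_iff (mul_ne_zero (hD (n+1)) (one_add_pow_ne_zero hq (2*n+3)))
      (mul_ne_zero (hD (n+1)) (one_add_pow_ne_zero hq (2*n+3)))]
    ring
  have hβr : ∀ n, β (n + 1) = β n * ((1 - q ^ (2 * n + 1)) * (-q ^ 2) / (1 + q ^ (2 * n + 2))) := by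
    intro n
    simp only [hβ]
    rw [qPoch_succ (1/q) (q^2) (n+1), qPoch_succ (-q^2) (q^2) n, h1q n, h2q n]
    rw [div_mul_div_comm]
    rw [div_eq_div_iff
      (mul_ne_zero hq1' (mul_ne_zero (hD n) (one_add_pow_ne_zero hq (2*n+1))))
      (mul_ne_zero (mul_ne_zero hq1' (hD n)) (one_add_pow_ne_zero hq (2*n+1)))]
    ring
  -- summability
  have hfs : Summable f := summable_of_mul_ratio hfr (normq2_lt_one hq) (tendsto_ratio hq 1 4)
  have hgs : Summable g := summable_of_mul_ratio hgr (normq2_lt_one hq) (tendsto_ratio hq 3 4)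
  have hβs : Summable β := summable_of_mul_ratio hβr (normq2_lt_one hq) (tendsto_ratio hq 1 2)
  have hβ0 : Tendsto β atTop (nhds 0) := hβs.tendsto_atTop_zero
  -- key per-term identity
  have hkey : ∀ n, (1 + q) / (1 - q) * f n - g n = β n - β (n + 1) := by
    intro n
    simp only [hf, hg, hβ]
    rw [qPoch_succ (-q^2) (q^2) n, h2q n,
      show n + 2 = (n + 1) + 1 by omega, qPoch_succ (1/q) (q^2) (n+1), h1q n]
    set P : ℂ := qPoch (1 / q) (q ^ 2) (n + 1) with hP
    set D : ℂ := qPoch (-q ^ 2) (q ^ 2) n with hDdef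
    have hDn : D ≠ 0 := hD n
    have hE : (1 : ℂ) + q ^ (2 * n + 2) ≠ 0 := one_add_pow_ne_zero hq (2*n+1)
    rw [div_mul_div_comm, div_sub_div _ _ (mul_ne_zero hq1' (mul_ne_zero hDn hE))
        (mul_ne_zero hDn hE),
      div_sub_div _ _ (mul_ne_zero hq1' hDn)
        (mul_ne_zero hq1' (mul_ne_zero hDn hE)),
      div_eq_div_iff
        (mul_ne_zero (mul_ne_zero hq1' (mul_ne_zero hDn hE)) (mul_ne_zero hDn hE))
        (mul_ne_zero (mul_ne_zero hq1' hDn)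
          (mul_ne_zero hq1' (mul_ne_zero hDn hE)))]
    ring
  -- telescoping sum
  have hts : Summable (fun n => β n - β (n + 1)) := by
    have h2 : Summable (fun n => β (n + 1)) := by
      rw [summable_nat_add_iff]; exact hβs
    exact hβs.sub h2
  have htsum : ∑' n, (β n - β (n + 1)) = β 0 := by
    have h1 : Tendsto (fun N => ∑ i ∈ Finset.range N, (β i - β (i + 1))) atTop
        (nhds (∑' n, (β n - β (n + 1)))) := hts.hasSum.tendsto_sum_nat
    have h2 : Tendsto (fun N => ∑ i ∈ Finset.range N, (β i - β (i + 1))) atTop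
        (nhds (β 0 - 0)) := by
      have h3 : Tendsto (fun N => β 0 - β N) atTop (nhds (β 0 - 0)) :=
        tendsto_const_nhds.sub hβ0
      refine Tendsto.congr (fun N => ?_) h3
      exact (Finset.sum_range_sub' β N).symm
    rw [sub_zero] at h2
    exact tendsto_nhds_unique h1 h2
  have hβ0v : β 0 = q := by
    simp only [hβ, qPoch]
    simp only [zero_add, Finset.prod_range_one, Finset.prod_range_zero]
    field_simp
    ring
  calc ((1 + q) / (1 - q)) * ∑' n, f n - ∑' n, g n
      = ∑' n, ((1 + q) / (1 - q) * f n) - ∑' n, g n := by rw [tsum_mul_left]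
    _ = ∑' n, ((1 + q) / (1 - q) * f n - g n) := by
        rw [Summable.tsum_sub (hfs.mul_left _) hgs]
    _ = ∑' n, (β n - β (n + 1)) := tsum_congr hkey
    _ = q := by rw [htsum, hβ0v]
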